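/- Let A_e = V Λ_e V⁻¹ with V unitary and λ_{e_k} = e^{-2πi(k-1)/N}, and suppose |y_F(n)| > 0 for all n, where y_F = V⁻¹ y. Then the graph Wiener-Hopf system R^G_{yy} h = r^G_{xy} (with R^G_{yy}(i,j) = yᴴ(A_e^{i-1})ᴴ A_e^{j-1} y and r^G_{xy}(i) = yᴴ(A_e^{i-1})ᴴ x, L = N taps) has the unique solution given in the DFT domain by h_DFT(i) = r_{xy,DFT}(i) / (N |y_F(i)|²), where h_DFT = W h, r_{xy,DFT} = W r^G_{xy}, and W is the normalized N-point DFT matrix. -/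

import Mathlib

open Matrix Complex

lemma aux_prim {N : ℕ} [NeZero N] :
    IsPrimitiveRoot (Complex.exp (-2 * Real.pi * Complex.I / N)) N := by
  have h := Complex.isPrimitiveRoot_exp N (NeZero.ne N)
  have he : Complex.exp (-2 * Real.pi * Complex.I / N)
      = (Complex.exp (2 * Real.pi * Complex.I / N))⁻¹ := by
    rw [← Complex.exp_neg]; congr 1; ring
  rw [he]; exact h.inv

lemma aux_conj {N : ℕ} [NeZero N] :
    star (Complex.exp (-2 * Real.pi * Complex.I / N))
      = (Complex.exp (-2 * Real.pi * Complex.I / N))⁻¹ := by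
  rw [show (star (Complex.exp (-2 * Real.pi * Complex.I / N)) : ℂ) = (starRingEnd ℂ) (Complex.exp (-2 * Real.pi * Complex.I / N)) from rfl, ← Complex.exp_conj, ← Complex.exp_neg]
  congr 1
  simp [map_div₀, Complex.conj_I, map_ofNat]
  ring

lemma aux_orth {N : ℕ} [NeZero N] (k l : Fin N) :
    ∑ j : Fin N, star ((Complex.exp (-2 * Real.pi * Complex.I / N)) ^ ((j:ℕ)*(k:ℕ))) *
      (Complex.exp (-2 * Real.pi * Complex.I / N)) ^ ((j:ℕ)*(l:ℕ)) =
      if k = l then (N:ℂ) else 0 := by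
  set ζ : ℂ := Complex.exp (-2 * Real.pi * Complex.I / N) with hζdef
  have hζ : IsPrimitiveRoot ζ N := aux_prim
  have hζ0 : ζ ≠ 0 := hζ.ne_zero (NeZero.ne N)
  set μ : ℂ := (ζ ^ (k:ℕ))⁻¹ * ζ ^ (l:ℕ) with hμ
  have hterm : ∀ j : Fin N,
      star (ζ ^ ((j:ℕ)*(k:ℕ))) * ζ ^ ((j:ℕ)*(l:ℕ)) = μ ^ (j:ℕ) := by
    intro j
    rw [star_pow, aux_conj, hμ, mul_pow, inv_pow, inv_pow, ← pow_mul, ← pow_mul,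
      Nat.mul_comm (k:ℕ), Nat.mul_comm (l:ℕ)]
  rw [Finset.sum_congr rfl (fun j _ => hterm j), Fin.sum_univ_eq_sum_range (fun j => μ ^ j)]
  by_cases hkl : k = l
  · subst hkl
    have : μ = 1 := by rw [hμ, inv_mul_cancel₀ (pow_ne_zero _ hζ0)]
    simp [this]
  · have hμ1 : μ ≠ 1 := by
      intro h
      apply hkl
      have hlk : ζ ^ (l:ℕ) = ζ ^ (k:ℕ) := by
        rw [hμ, inv_mul_eq_one₀ (pow_ne_zero _ hζ0)] at h
        exact h.symm
      exact (Fin.ext (hζ.pow_inj l.isLt k.isLt hlk)).symm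
    have hμN : μ ^ N = 1 := by
      rw [hμ, mul_pow, inv_pow, ← pow_mul, ← pow_mul, Nat.mul_comm (k:ℕ),
        Nat.mul_comm (l:ℕ), pow_mul, pow_mul, hζ.pow_eq_one, one_pow, one_pow, inv_one, one_mul]
    rw [geom_sum_eq hμ1, hμN]
    simp [hkl]

/-- Graph Wiener-Hopf equation for the special shift operator `A_e` with unitary GFT:
the system `R^G_{yy} h = r^G_{xy}` has a unique solution, given in the DFT domain by
`h_DFT(i) = r_{xy,DFT}(i) / (N |y_F(i)|²)`. -/
theorem stmt_16 {N : ℕ} [NeZero N] (V Ae : Matrix (Fin N) (Fin N) ℂ)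
    (hV : V ∈ Matrix.unitaryGroup (Fin N) ℂ)
    (hAe : Ae = V * Matrix.diagonal
      (fun k : Fin N => Complex.exp (-2 * Real.pi * Complex.I * (k : ℕ) / N)) * Vᴴ)
    (x y : Fin N → ℂ) (hy : ∀ n, 0 < ‖(Vᴴ *ᵥ y) n‖)
    (R : Matrix (Fin N) (Fin N) ℂ)
    (hR : R = fun (i j : Fin N) => star y ⬝ᵥ (((Ae ^ (i : ℕ))ᴴ * Ae ^ (j : ℕ)) *ᵥ y))
    (r : Fin N → ℂ)
    (hr : r = fun (i : Fin N) => star y ⬝ᵥ ((Ae ^ (i : ℕ))ᴴ *ᵥ x))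
    (W : Matrix (Fin N) (Fin N) ℂ)
    (hW : W = fun (k l : Fin N) => (1 / Real.sqrt N : ℂ) *
      Complex.exp (-2 * Real.pi * Complex.I * (k : ℕ) * (l : ℕ) / N)) :
    (∃! h : Fin N → ℂ, R *ᵥ h = r) ∧
    ∀ h : Fin N → ℂ, R *ᵥ h = r →
      ∀ i : Fin N, (W *ᵥ h) i = (W *ᵥ r) i / ((N : ℂ) * (‖(Vᴴ *ᵥ y) i‖ ^ 2 : ℂ)) := by
  have hN : (N:ℂ) ≠ 0 := Nat.cast_ne_zero.2 (NeZero.ne N)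
  set ζ : ℂ := Complex.exp (-2 * Real.pi * Complex.I / N) with hζdef
  set yF : Fin N → ℂ := Vᴴ *ᵥ y with hyFdef
  set xF : Fin N → ℂ := Vᴴ *ᵥ x with hxFdef
  set d : Fin N → ℂ := fun k => (‖yF k‖ : ℂ) ^ 2 with hddef
  have hd : ∀ k, d k = star (yF k) * yF k := by
    intro k
    show (‖yF k‖:ℂ)^2 = star (yF k) * yF k
    rw [← Complex.ofReal_pow, Complex.sq_norm,
      Complex.normSq_eq_conj_mul_self]
    rfl
  have hd0 : ∀ k, d k ≠ 0 := by
    intro k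
    exact pow_ne_zero 2 (Complex.ofReal_ne_zero.2 (ne_of_gt (hy k)))
  set M : Matrix (Fin N) (Fin N) ℂ := Matrix.of (fun k l : Fin N => ζ ^ ((k:ℕ)*(l:ℕ))) with hM
  -- DFT orthogonality
  have hMHM : Mᴴ * M = (N:ℂ) • 1 := by
    ext k l
    simp only [Matrix.mul_apply, Matrix.conjTranspose_apply, hM, Matrix.of_apply,
      Matrix.smul_apply, Matrix.one_apply, smul_eq_mul]
    rw [aux_orth k l]
    split_ifs <;> simp
  have hMMH : M * Mᴴ = (N:ℂ) • 1 := by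
    ext k l
    simp only [Matrix.mul_apply, Matrix.conjTranspose_apply, hM, Matrix.of_apply,
      Matrix.smul_apply, Matrix.one_apply, smul_eq_mul]
    have : ∀ j : Fin N, ζ ^ ((k:ℕ)*(j:ℕ)) * star (ζ ^ ((l:ℕ)*(j:ℕ)))
        = star (ζ ^ ((j:ℕ)*(l:ℕ))) * ζ ^ ((j:ℕ)*(k:ℕ)) := by
      intro j; rw [Nat.mul_comm (k:ℕ), Nat.mul_comm (l:ℕ)]; ring
    rw [Finset.sum_congr rfl (fun j _ => this j), aux_orth l k]
    rcases eq_or_ne k l with h | h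
    · simp [h]
    · simp [h, Ne.symm h]
  have hVV : Vᴴ * V = 1 := by rw [← Matrix.star_eq_conjTranspose]; exact hV.1
  have hVV' : V * Vᴴ = 1 := by rw [← Matrix.star_eq_conjTranspose]; exact hV.2
  have hcancel : ∀ X : Matrix (Fin N) (Fin N) ℂ, Vᴴ * (V * X) = X := by
    intro X; rw [← Matrix.mul_assoc, hVV, Matrix.one_mul]
  set D : Matrix (Fin N) (Fin N) ℂ := Matrix.diagonal (fun k : Fin N => ζ ^ (k:ℕ)) with hD
  have hlam : ∀ k : Fin N, Complex.exp (-2 * Real.pi * Complex.I * (k:ℕ) / N) = ζ ^ (k:ℕ) := by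
    intro k
    rw [hζdef, ← Complex.exp_nat_mul]
    congr 1
    ring
  have hAe' : Ae = V * D * Vᴴ := by
    rw [hAe, funext hlam, hD]
  have hDpow : ∀ m : ℕ, D ^ m = Matrix.diagonal fun k : Fin N => ζ ^ ((k:ℕ)*m) := by
    intro m
    rw [hD, Matrix.diagonal_pow]
    have : ((fun k : Fin N => ζ ^ (k:ℕ)) ^ m) = fun k : Fin N => ζ ^ ((k:ℕ)*m) := by
      funext k
      simp [pow_mul]
    rw [this]
  have hpow : ∀ m : ℕ, Ae ^ m = V * D ^ m * Vᴴ := by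
    intro m
    induction m with
    | zero => simp [hVV']
    | succ m ih =>
      rw [pow_succ, ih, hAe', pow_succ]
      simp only [Matrix.mul_assoc]
      rw [hcancel]
  have hprod : ∀ i j : Fin N, (Ae ^ (i:ℕ))ᴴ * Ae ^ (j:ℕ)
      = V * Matrix.diagonal (fun k : Fin N =>
          star (ζ ^ ((k:ℕ)*(i:ℕ))) * ζ ^ ((k:ℕ)*(j:ℕ))) * Vᴴ := by
    intro i j
    rw [hpow, hpow, hDpow, hDpow, Matrix.conjTranspose_mul, Matrix.conjTranspose_mul,
      Matrix.conjTranspose_conjTranspose, Matrix.diagonal_conjTranspose]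
    simp only [Matrix.mul_assoc]
    rw [hcancel, ← Matrix.mul_assoc (Matrix.diagonal _), Matrix.diagonal_mul_diagonal]
    simp only [Pi.star_apply]
  have hsand : ∀ (c w : Fin N → ℂ),
      star y ⬝ᵥ ((V * Matrix.diagonal c * Vᴴ) *ᵥ w)
        = ∑ k, star (yF k) * (c k * (Vᴴ *ᵥ w) k) := by
    intro c w
    rw [← Matrix.mulVec_mulVec, ← Matrix.mulVec_mulVec, Matrix.dotProduct_mulVec]
    have hst : star y ᵥ* V = star yF := by
      rw [hyFdef, Matrix.star_mulVec, Matrix.conjTranspose_conjTranspose]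
    rw [hst]
    simp [dotProduct, Matrix.mulVec_diagonal]
  have hRfac : R = Mᴴ * (Matrix.diagonal d * M) := by
    ext i j
    rw [hR]
    simp only [hprod]
    rw [hsand, Matrix.mul_apply]
    refine Finset.sum_congr rfl fun k _ => ?_
    rw [Matrix.conjTranspose_apply, Matrix.diagonal_mul, hd k]
    simp only [hM, Matrix.of_apply]
    ring
  set v : Fin N → ℂ := fun k => star (yF k) * xF k with hvdef
  have hAeiH : ∀ i : Fin N, (Ae ^ (i:ℕ))ᴴ
      = V * Matrix.diagonal (fun k : Fin N => star (ζ ^ ((k:ℕ)*(i:ℕ)))) * Vᴴ := by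
    intro i
    have h0 := hprod i 0
    simpa using h0
  have hMHv : ∀ (u : Fin N → ℂ) (i : Fin N), (Mᴴ *ᵥ u) i = ∑ k : Fin N, star (ζ ^ ((k:ℕ)*(i:ℕ))) * u k := by
    intro u i
    simp [Matrix.mulVec, dotProduct, Matrix.conjTranspose_apply, hM]
  have hrfac : r = Mᴴ *ᵥ v := by
    funext i
    rw [hr]
    simp only [hAeiH]
    rw [hsand, hMHv, ← hxFdef]
    refine Finset.sum_congr rfl fun k _ => ?_
    rw [hvdef]
    ring
  -- cancellation helpers
  have hc1 : ∀ X : Matrix (Fin N) (Fin N) ℂ, M * (Mᴴ * X) = (N:ℂ) • X := by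
    intro X; rw [← Matrix.mul_assoc, hMMH, Matrix.smul_mul, Matrix.one_mul]
  set dinv : Fin N → ℂ := fun k => (d k)⁻¹ with hdinvdef
  have hdd : Matrix.diagonal d * Matrix.diagonal dinv = 1 := by
    rw [Matrix.diagonal_mul_diagonal]
    ext a b
    by_cases hab : a = b <;>
      simp [Matrix.diagonal_apply, Matrix.one_apply, hab, hdinvdef, mul_inv_cancel₀ (hd0 b)]
  set B : Matrix (Fin N) (Fin N) ℂ :=
    ((N:ℂ)⁻¹ • Mᴴ) * (Matrix.diagonal dinv * ((N:ℂ)⁻¹ • M)) with hBdef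
  have hRB : R * B = 1 := by
    rw [hRfac, hBdef]
    simp only [Matrix.mul_smul, Matrix.smul_mul, Matrix.mul_assoc, smul_smul]
    rw [hc1 (Matrix.diagonal dinv * M)]
    simp only [Matrix.mul_smul, smul_smul]
    rw [← Matrix.mul_assoc (Matrix.diagonal d), hdd, Matrix.one_mul, hMHM]
    rw [smul_smul]
    rw [show (N:ℂ)⁻¹ * (N:ℂ)⁻¹ * (N:ℂ) * (N:ℂ) = 1 by field_simp]
    rw [one_smul]
  have hBR : B * R = 1 := mul_eq_one_comm.mp hRB
  have hvcancel : ∀ w w' : Fin N → ℂ, Mᴴ *ᵥ w = Mᴴ *ᵥ w' → w = w' := by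
    intro w w' hww
    have h2 := congrArg (fun z => M *ᵥ z) hww
    simp only [Matrix.mulVec_mulVec, hMMH] at h2
    funext j
    have hj := congrFun h2 j
    simp only [Matrix.smul_mulVec, Matrix.one_mulVec, Pi.smul_apply, smul_eq_mul] at hj
    exact mul_left_cancel₀ hN hj
  have hWM : W = ((Real.sqrt N : ℝ) : ℂ)⁻¹ • M := by
    rw [hW]
    ext k l
    simp only [Matrix.smul_apply, hM, Matrix.of_apply, smul_eq_mul, one_div]
    congr 1
    rw [hζdef, ← Complex.exp_nat_mul]
    congr 1
    push_cast
    ring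
  constructor
  · refine ⟨B *ᵥ r, ?_, ?_⟩
    · show R *ᵥ (B *ᵥ r) = r
      rw [Matrix.mulVec_mulVec, hRB, Matrix.one_mulVec]
    · intro h hh
      calc h = (B * R) *ᵥ h := by rw [hBR, Matrix.one_mulVec]
        _ = B *ᵥ (R *ᵥ h) := by rw [Matrix.mulVec_mulVec]
        _ = B *ᵥ r := by rw [hh]
  · intro h hh i
    rw [hRfac, hrfac] at hh
    rw [← Matrix.mulVec_mulVec, ← Matrix.mulVec_mulVec] at hh
    have hDu : Matrix.diagonal d *ᵥ (M *ᵥ h) = v := hvcancel _ _ hh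
    have hui : d i * (M *ᵥ h) i = v i := by
      have := congrFun hDu i
      rwa [Matrix.mulVec_diagonal] at this
    have hMr : (M *ᵥ r) i = (N:ℂ) * v i := by
      rw [hrfac, Matrix.mulVec_mulVec, hMMH]
      simp [Matrix.smul_mulVec, Matrix.one_mulVec]
    rw [hWM]
    simp only [Matrix.smul_mulVec, Pi.smul_apply, smul_eq_mul]
    rw [hMr, show ((‖yF i‖ : ℂ) ^ 2 : ℂ) = d i from rfl]
    have hdi := hd0 i
    have hs : ((Real.sqrt N : ℝ) : ℂ) ≠ 0 := by
      simp only [ne_eq, Complex.ofReal_eq_zero]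
      exact Real.sqrt_ne_zero'.mpr (Nat.cast_pos.mpr (Nat.pos_of_ne_zero (NeZero.ne N)))
    have hui' : ((‖yF i‖ : ℂ) ^ 2) * (M *ᵥ h) i = star (yF i) * xF i := hui
    field_simp
    linear_combination hui'
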